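/- Let q ≥ p ≥ 1, n ∈ ℕ, and z ∈ ℂ^N. Then σ_{3n}(z)_{ℓ_q} ≤ n^{1/q−1/p} · σ_{2n}(z)_{ℓ_p}. -/

import Mathlib

open scoped BigOperators
open scoped Classical

/-- The `ℓ_p` norm of a finite complex vector. -/
noncomputable def lpNorm {ι : Type*} [Fintype ι] (p : ℝ) (v : ι → ℂ) : ℝ :=
  (∑ i, ‖v i‖ ^ p) ^ (1 / p)

/-- Number of nonzero entries of a vector. -/
noncomputable def sparsity {ι : Type*} [Fintype ι] (v : ι → ℂ) : ℕ :=
  (Finset.univ.filter fun i => v i ≠ 0).card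

/-- Best `n`-term approximation error of `v` in `ℓ_p`. -/
noncomputable def bestApprox {ι : Type*} [Fintype ι] (n : ℕ) (p : ℝ) (v : ι → ℂ) : ℝ :=
  sInf {t : ℝ | ∃ z : ι → ℂ, sparsity z ≤ n ∧ t = lpNorm p (v - z)}

/-- `A` satisfies the restricted isometry property of order `n` with constant `δ`. -/
def HasRIP {m : ℕ} {ι : Type*} [Fintype ι] (A : Matrix (Fin m) ι ℂ) (n : ℕ) (δ : ℝ) : Prop :=
  ∀ v : ι → ℂ, sparsity v ≤ n →
    (1 - δ) * lpNorm 2 v ^ 2 ≤ lpNorm 2 (A.mulVec v) ^ 2 ∧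
      lpNorm 2 (A.mulVec v) ^ 2 ≤ (1 + δ) * lpNorm 2 v ^ 2

/-- `A` satisfies the `ℓ₂`-robust null space property of order `n`
with constants `ρ` and `τ`. -/
def HasNSP {m : ℕ} {ι : Type*} [Fintype ι] (A : Matrix (Fin m) ι ℂ) (n : ℕ) (ρ τ : ℝ) : Prop :=
  ∀ (v : ι → ℂ) (S : Finset ι), S.card ≤ n →
    lpNorm 2 (fun i => if i ∈ S then v i else 0) ≤
      ρ * (n : ℝ) ^ (-(1 : ℝ) / 2) * lpNorm 1 (fun i => if i ∈ S then 0 else v i) +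
        τ * lpNorm 2 (A.mulVec v)

lemma lpNorm_nonneg {ι : Type*} [Fintype ι] (p : ℝ) (v : ι → ℂ) : 0 ≤ lpNorm p v :=
  Real.rpow_nonneg (Finset.sum_nonneg fun i _ => Real.rpow_nonneg (norm_nonneg _) _) _

lemma bestApprox_bddBelow {ι : Type*} [Fintype ι] (n : ℕ) (p : ℝ) (v : ι → ℂ) :
    BddBelow {t : ℝ | ∃ z, sparsity z ≤ n ∧ t = lpNorm p (v - z)} :=
  ⟨0, fun t ⟨w, _, ht⟩ => ht ▸ lpNorm_nonneg p _⟩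

lemma bestApprox_le {ι : Type*} [Fintype ι] (n : ℕ) (p : ℝ) (v w : ι → ℂ) (hw : sparsity w ≤ n) :
    bestApprox n p v ≤ lpNorm p (v - w) :=
  csInf_le (bestApprox_bddBelow n p v) ⟨w, hw, rfl⟩

lemma le_bestApprox {ι : Type*} [Fintype ι] (n : ℕ) (p : ℝ) (v : ι → ℂ) (c : ℝ)
    (h : ∀ w : ι → ℂ, sparsity w ≤ n → c ≤ lpNorm p (v - w)) : c ≤ bestApprox n p v :=
  le_csInf ⟨_, 0, by simp [sparsity], rfl⟩ (fun t ⟨w, hw, ht⟩ => ht ▸ h w hw)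

lemma bestApprox_nonneg {ι : Type*} [Fintype ι] (n : ℕ) (p : ℝ) (v : ι → ℂ) :
    0 ≤ bestApprox n p v :=
  le_bestApprox n p v 0 fun w _ => lpNorm_nonneg p _

lemma exists_top_set {ι : Type*} [Fintype ι] (f : ι → ℝ) (k : ℕ) (hk : k ≤ Fintype.card ι) :
    ∃ S : Finset ι, S.card = k ∧ ∀ i ∈ S, ∀ j ∉ S, f j ≤ f i := by
  obtain ⟨S0, _, hS0⟩ := Finset.exists_subset_card_eq (s := (Finset.univ : Finset ι)) hk
  obtain ⟨S, hSmem, hmax⟩ := Finset.exists_max_image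
    ((Finset.univ : Finset ι).powersetCard k) (fun S => ∑ i ∈ S, f i)
    ⟨S0, Finset.mem_powersetCard.2 ⟨Finset.subset_univ _, hS0⟩⟩
  have hcard : S.card = k := (Finset.mem_powersetCard.1 hSmem).2
  refine ⟨S, hcard, fun i hi j hj => ?_⟩
  by_contra hlt
  push_neg at hlt
  have hji : j ∉ S.erase i := fun h => hj (Finset.mem_of_mem_erase h)
  have hcard' : (insert j (S.erase i)).card = k := by
    have h1 : 1 ≤ S.card := Finset.card_pos.2 ⟨i, hi⟩
    rw [Finset.card_insert_of_notMem hji, Finset.card_erase_of_mem hi]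
    omega
  have := hmax (insert j (S.erase i)) (Finset.mem_powersetCard.2 ⟨Finset.subset_univ _, hcard'⟩)
  rw [Finset.sum_insert hji] at this
  have herase : ∑ x ∈ S.erase i, f x + f i = ∑ x ∈ S, f x := Finset.sum_erase_add S f hi
  linarith

lemma sum_le_sum_top {ι : Type*} [Fintype ι] (f : ι → ℝ) (hf : ∀ i, 0 ≤ f i)
    (S U : Finset ι) (hcard : U.card ≤ S.card)
    (htop : ∀ i ∈ S, ∀ j ∉ S, f j ≤ f i) :
    ∑ i ∈ U, f i ≤ ∑ i ∈ S, f i := by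
  classical
  have h1 : ∑ i ∈ U, f i = ∑ i ∈ U ∩ S, f i + ∑ i ∈ U \ S, f i :=
    (Finset.sum_inter_add_sum_sdiff U S f).symm
  have h2 : ∑ i ∈ S, f i = ∑ i ∈ S ∩ U, f i + ∑ i ∈ S \ U, f i :=
    (Finset.sum_inter_add_sum_sdiff S U f).symm
  rw [h1, h2, Finset.inter_comm U S]
  have hkey : ∑ i ∈ U \ S, f i ≤ ∑ i ∈ S \ U, f i := by
    rcases (S \ U).eq_empty_or_nonempty with he | hne
    · have hsub : S ⊆ U := by
        intro x hx
        by_contra hxu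
        exact absurd (Finset.mem_sdiff.2 ⟨hx, hxu⟩) (he ▸ Finset.notMem_empty x)
      have : U = S := (Finset.eq_of_subset_of_card_le hsub hcard).symm
      simp [this]
    · obtain ⟨j₀, hj₀, hj₀min⟩ := Finset.exists_min_image (S \ U) f hne
      have hj₀S : j₀ ∈ S := (Finset.mem_sdiff.1 hj₀).1
      have hcard2 : (U \ S).card ≤ (S \ U).card := by
        have := Finset.card_inter_add_card_sdiff U S
        have := Finset.card_inter_add_card_sdiff S U
        rw [Finset.inter_comm S U] at this
        omega
      calc ∑ i ∈ U \ S, f i ≤ (U \ S).card • f j₀ :=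
            Finset.sum_le_card_nsmul _ _ _ (fun i hi =>
              htop j₀ hj₀S i (Finset.mem_sdiff.1 hi).2)
        _ ≤ (S \ U).card • f j₀ := by
            exact nsmul_le_nsmul_left (hf j₀) hcard2
        _ ≤ ∑ i ∈ S \ U, f i := Finset.card_nsmul_le_sum _ _ _ hj₀min
  linarith

lemma rpow_key_identity (p q E c : ℝ) (hp0 : 0 < p) (hq0 : 0 < q)
    (hE : 0 < E) (hc : 0 < c) :
    (((E / c) ^ (1/p)) ^ (q - p) * E) ^ (1/q) = c ^ (1/q - 1/p) * E ^ (1/p) := by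
  have h1 : ((E/c) ^ (1/p)) ^ (q-p) = (E/c) ^ ((q-p)/p) := by
    rw [← Real.rpow_mul (by positivity)]
    congr 1
    field_simp
  rw [h1, Real.div_rpow hE.le hc.le, div_mul_eq_mul_div, ← Real.rpow_add_one hE.ne',
    Real.div_rpow (by positivity) (by positivity), ← Real.rpow_mul hE.le,
    ← Real.rpow_mul hc.le]
  have e1 : ((q-p)/p + 1) * (1/q) = 1/p := by field_simp; ring
  have e2 : (q-p)/p * (1/q) = 1/p - 1/q := by field_simp
  rw [e1, e2, show (1/q - 1/p : ℝ) = -(1/p - 1/q) by ring, Real.rpow_neg hc.le,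
    div_eq_mul_inv, mul_comm]

/-- **Comparison of best term approximations** (cf. Dũng–Temlyakov–Ullrich,
Lem. 7.4.1 and the corollary used in the paper): for `q ≥ p ≥ 1`,
`σ_{3n}(z)_q ≤ n^{1/q−1/p} σ_{2n}(z)_p`. -/
theorem stmt17 {N : ℕ} (p q : ℝ) (hp : 1 ≤ p) (hpq : p ≤ q) (n : ℕ) (hn : 0 < n)
    (z : Fin N → ℂ) :
    bestApprox (3 * n) q z ≤ (n : ℝ) ^ (1 / q - 1 / p) * bestApprox (2 * n) p z := by
  have hp0 : (0:ℝ) < p := lt_of_lt_of_le one_pos hp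
  have hq0 : (0:ℝ) < q := lt_of_lt_of_le hp0 hpq
  have hrhs0 : 0 ≤ (n : ℝ) ^ (1 / q - 1 / p) * bestApprox (2 * n) p z :=
    mul_nonneg (Real.rpow_nonneg (Nat.cast_nonneg n) _) (bestApprox_nonneg _ _ _)
  by_cases hN : N ≤ 3 * n
  · -- trivial case: z itself is a 3n-sparse approximant
    have hz : sparsity z ≤ 3 * n :=
      le_trans (le_trans (Finset.card_le_card (Finset.filter_subset _ _)) (by simp)) hN
    have h0 : lpNorm q (z - z) = 0 := by
      simp only [sub_self, lpNorm, Pi.zero_apply, norm_zero]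
      rw [Real.zero_rpow hq0.ne', Finset.sum_const, smul_zero,
        Real.zero_rpow (by positivity : 1/q ≠ 0)]
    exact le_trans (le_trans (bestApprox_le _ _ _ _ hz) (le_of_eq h0)) hrhs0
  push_neg at hN
  -- top 2n set S
  obtain ⟨S, hScard, hStop⟩ := exists_top_set (fun i => ‖z i‖) (2*n)
    (by rw [Fintype.card_fin]; omega)
  set B : ℝ := 1 + ∑ i, ‖z i‖ with hB
  have hBgt : ∀ j, ‖z j‖ < B := by
    intro j
    have : ‖z j‖ ≤ ∑ i, ‖z i‖ :=
      Finset.single_le_sum (fun i _ => norm_nonneg (z i)) (Finset.mem_univ j)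
    simp only [hB]; linarith
  set f' : Fin N → ℝ := fun j => if j ∈ S then B else ‖z j‖ with hf'
  obtain ⟨S₃, hS₃card, hS₃top⟩ := exists_top_set f' (3*n)
    (by rw [Fintype.card_fin]; omega)
  have hSsub : S ⊆ S₃ := by
    intro j hjS
    by_contra hj
    have hsub : S₃ ⊆ S := by
      intro i hi
      by_contra hiS
      have h := hS₃top i hi j hj
      simp only [hf', hjS, hiS, if_pos, if_neg, if_true, if_false] at h
      exact absurd h (not_le.2 (hBgt i))
    have h1 := Finset.card_le_card hsub
    rw [hScard, hS₃card] at h1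
    omega
  set T : Finset (Fin N) := S₃ \ S with hT
  have hTcard : T.card = n := by
    rw [hT, Finset.card_sdiff_of_subset hSsub, hScard, hS₃card]; omega
  have hTne : T.Nonempty := Finset.card_pos.1 (by omega)
  obtain ⟨j₀, hj₀T, hj₀min⟩ := Finset.exists_min_image T (fun i => ‖z i‖) hTne
  have hTtop : ∀ j, j ∉ S₃ → ‖z j‖ ≤ ‖z j₀‖ := by
    intro j hj
    have h := hS₃top j₀ ((Finset.mem_sdiff.1 hj₀T).1) j hj
    have hj₀S : j₀ ∉ S := (Finset.mem_sdiff.1 hj₀T).2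
    have hjS : j ∉ S := fun h' => hj (hSsub h')
    simpa [hf', hj₀S, hjS] using h
  set E : ℝ := ∑ i ∈ Sᶜ, ‖z i‖ ^ p with hE
  have hE0 : 0 ≤ E := Finset.sum_nonneg fun i _ => Real.rpow_nonneg (norm_nonneg _) _
  -- Step R : E^{1/p} ≤ bestApprox (2n) p z
  have hR : E ^ (1/p) ≤ bestApprox (2*n) p z := by
    apply le_bestApprox
    intro w hw
    set U : Finset (Fin N) := Finset.univ.filter (fun i => w i ≠ 0) with hU
    have h1 : ∑ i ∈ Uᶜ, ‖z i‖ ^ p ≤ ∑ i, ‖(z - w) i‖ ^ p := by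
      calc ∑ i ∈ Uᶜ, ‖z i‖ ^ p = ∑ i ∈ Uᶜ, ‖(z - w) i‖ ^ p := by
            refine Finset.sum_congr rfl fun i hi => ?_
            have hwi : w i = 0 := by
              have := Finset.mem_compl.1 hi
              simp only [hU, Finset.mem_filter, Finset.mem_univ, true_and, not_not] at this
              exact this
            simp [hwi]
        _ ≤ ∑ i, ‖(z - w) i‖ ^ p :=
            Finset.sum_le_sum_of_subset_of_nonneg (Finset.subset_univ _)
              (fun i _ _ => Real.rpow_nonneg (norm_nonneg _) _)
    have h2 : E ≤ ∑ i ∈ Uᶜ, ‖z i‖ ^ p := by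
      have hUS : ∑ i ∈ U, ‖z i‖ ^ p ≤ ∑ i ∈ S, ‖z i‖ ^ p := by
        refine sum_le_sum_top _ (fun i => Real.rpow_nonneg (norm_nonneg _) _) S U ?_ ?_
        · rw [hScard]; exact hw
        · exact fun i hi j hj => Real.rpow_le_rpow (norm_nonneg _) (hStop i hi j hj) hp0.le
      have hs1 := Finset.sum_add_sum_compl U (fun i => ‖z i‖ ^ p)
      have hs2 := Finset.sum_add_sum_compl S (fun i => ‖z i‖ ^ p)
      simp only [hE]
      linarith
    calc E ^ (1/p) ≤ (∑ i, ‖(z - w) i‖ ^ p) ^ (1/p) :=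
          Real.rpow_le_rpow hE0 (h2.trans h1) (by positivity)
      _ = lpNorm p (z - w) := rfl
  -- Step L : bestApprox (3n) q z ≤ A^{1/q}
  set A : ℝ := ∑ i ∈ S₃ᶜ, ‖z i‖ ^ q with hA
  have hA0 : 0 ≤ A := Finset.sum_nonneg fun i _ => Real.rpow_nonneg (norm_nonneg _) _
  have hL : bestApprox (3*n) q z ≤ A ^ (1/q) := by
    set w : Fin N → ℂ := fun i => if i ∈ S₃ then z i else 0 with hwdef
    have hsp : sparsity w ≤ 3 * n := by
      rw [← hS₃card]
      apply Finset.card_le_card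
      intro i hi
      simp only [Finset.mem_filter, Finset.mem_univ, true_and, hwdef] at hi
      by_contra h
      exact hi (if_neg h)
    have heq : lpNorm q (z - w) = A ^ (1/q) := by
      unfold lpNorm
      congr 1
      rw [← Finset.sum_add_sum_compl S₃ (fun i => ‖(z - w) i‖ ^ q), hA]
      have e1 : ∑ i ∈ S₃, ‖(z - w) i‖ ^ q = 0 := by
        refine Finset.sum_eq_zero fun i hi => ?_
        simp [hwdef, hi, Real.zero_rpow hq0.ne']
      have e2 : ∑ i ∈ S₃ᶜ, ‖(z - w) i‖ ^ q = ∑ i ∈ S₃ᶜ, ‖z i‖ ^ q := by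
        refine Finset.sum_congr rfl fun i hi => ?_
        have : i ∉ S₃ := Finset.mem_compl.1 hi
        simp [hwdef, this]
      rw [e1, e2, zero_add]
    exact heq ▸ bestApprox_le _ _ _ _ hsp
  -- now the middle estimate
  by_cases hμ : ‖z j₀‖ = 0
  · have hAz : A = 0 := by
      refine Finset.sum_eq_zero fun i hi => ?_
      have : ‖z i‖ ≤ 0 := hμ ▸ hTtop i (Finset.mem_compl.1 hi)
      have : ‖z i‖ = 0 := le_antisymm this (norm_nonneg _)
      rw [this, Real.zero_rpow hq0.ne']
    calc bestApprox (3*n) q z ≤ A ^ (1/q) := hL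
      _ = 0 := by rw [hAz, Real.zero_rpow (by positivity : 1/q ≠ 0)]
      _ ≤ _ := hrhs0
  · have hμ0 : 0 < ‖z j₀‖ := lt_of_le_of_ne (norm_nonneg _) (Ne.symm hμ)
    have hn' : (0:ℝ) < n := Nat.cast_pos.2 hn
    have hnμ : (n:ℝ) * ‖z j₀‖ ^ p ≤ E := by
      have h1 : T.card • (‖z j₀‖ ^ p) ≤ ∑ i ∈ T, ‖z i‖ ^ p :=
        Finset.card_nsmul_le_sum T _ _ (fun i hi =>
          Real.rpow_le_rpow (norm_nonneg _) (hj₀min i hi) hp0.le)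
      have h2 : ∑ i ∈ T, ‖z i‖ ^ p ≤ E := by
        refine Finset.sum_le_sum_of_subset_of_nonneg ?_
          (fun i _ _ => Real.rpow_nonneg (norm_nonneg _) _)
        intro i hi
        exact Finset.mem_compl.2 (Finset.mem_sdiff.1 hi).2
      rw [hTcard, nsmul_eq_mul] at h1
      linarith
    have hEpos : 0 < E := lt_of_lt_of_le (by positivity) hnμ
    have hμle : ‖z j₀‖ ≤ (E / n) ^ (1/p) := by
      have h1 : ‖z j₀‖ ^ p ≤ E / n := (le_div_iff₀ hn').2 (by linarith [hnμ])
      calc ‖z j₀‖ = (‖z j₀‖ ^ p) ^ (1/p) := by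
            rw [← Real.rpow_mul (norm_nonneg _), mul_one_div_cancel hp0.ne', Real.rpow_one]
        _ ≤ (E / n) ^ (1/p) := Real.rpow_le_rpow (by positivity) h1 (by positivity)
    have hAle : A ≤ ((E / n) ^ (1/p)) ^ (q - p) * E := by
      have step1 : A ≤ ‖z j₀‖ ^ (q - p) * E := by
        have hterm : ∀ i ∈ S₃ᶜ, ‖z i‖ ^ q ≤ ‖z j₀‖ ^ (q - p) * ‖z i‖ ^ p := by
          intro i hi
          rcases eq_or_lt_of_le (norm_nonneg (z i)) with h0 | hpos
          · rw [← h0, Real.zero_rpow hq0.ne']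
            positivity
          · have : ‖z i‖ ^ q = ‖z i‖ ^ (q - p) * ‖z i‖ ^ p := by
              rw [← Real.rpow_add hpos]; ring_nf
            rw [this]
            exact mul_le_mul_of_nonneg_right
              (Real.rpow_le_rpow (norm_nonneg _)
                (hTtop i (Finset.mem_compl.1 hi)) (by linarith))
              (Real.rpow_nonneg (norm_nonneg _) _)
        calc A ≤ ∑ i ∈ S₃ᶜ, ‖z j₀‖ ^ (q - p) * ‖z i‖ ^ p :=
              Finset.sum_le_sum hterm
          _ = ‖z j₀‖ ^ (q - p) * ∑ i ∈ S₃ᶜ, ‖z i‖ ^ p := by rw [Finset.mul_sum]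
          _ ≤ ‖z j₀‖ ^ (q - p) * E :=
              mul_le_mul_of_nonneg_left
                (Finset.sum_le_sum_of_subset_of_nonneg
                  (Finset.compl_subset_compl.2 hSsub)
                  (fun i _ _ => Real.rpow_nonneg (norm_nonneg _) _))
                (Real.rpow_nonneg (norm_nonneg _) _)
      have step2 : ‖z j₀‖ ^ (q - p) ≤ ((E / n) ^ (1/p)) ^ (q - p) :=
        Real.rpow_le_rpow (norm_nonneg _) hμle (by linarith)
      calc A ≤ ‖z j₀‖ ^ (q - p) * E := step1
        _ ≤ ((E / n) ^ (1/p)) ^ (q - p) * E :=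
              mul_le_mul_of_nonneg_right step2 hEpos.le
    -- the algebraic identity
    have hkey : (((E / n) ^ (1/p)) ^ (q - p) * E) ^ (1/q)
        = (n:ℝ) ^ (1/q - 1/p) * E ^ (1/p) :=
      rpow_key_identity p q E n hp0 hq0 hEpos hn'
    calc bestApprox (3*n) q z ≤ A ^ (1/q) := hL
      _ ≤ (((E / n) ^ (1/p)) ^ (q - p) * E) ^ (1/q) :=
          Real.rpow_le_rpow hA0 hAle (by positivity)
      _ = (n:ℝ) ^ (1/q - 1/p) * E ^ (1/p) := hkey
      _ ≤ (n:ℝ) ^ (1/q - 1/p) * bestApprox (2*n) p z :=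
          mul_le_mul_of_nonneg_left hR (Real.rpow_nonneg hn'.le _)
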